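/- arXiv:2005.00875 — 2 statements merged into one kernel-verified Lean document; each statement's English description precedes it below -/
import Mathlib

section
/- For every integer i ≥ 3, every axis-aligned square S, and every triangle T of Slicing(i) of S, at least one tile of Tiling(4φ(i)) of S is contained in the interior of T. -/
open Real

noncomputable section

/-- Points of the Euclidean plane. -/
abbrev Pt := EuclideanSpace ℝ (Fin 2)

/-- The unit vector in direction angle `a`. -/
def unitDir (a : ℝ) : Pt := !₂[Real.cos a, Real.sin a]

/-- The closed angular sector with apex `p`, swept clockwise from the half-line in
direction angle `a` through angle `θ` (it consists of the points lying on the half-lines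
from `p` in the direction angles `a - t` for `0 ≤ t ≤ θ`, including both bounding
half-lines). -/
def sector (p : Pt) (a θ : ℝ) : Set Pt :=
  {q | ∃ r : ℝ, 0 ≤ r ∧ ∃ t : ℝ, 0 ≤ t ∧ t ≤ θ ∧ q = p + r • unitDir (a - t)}

/-- The axis-aligned square with center `q` and side length `x`. -/
def square (q : Pt) (x : ℝ) : Set Pt :=
  {y | y 0 ∈ Set.Icc (q 0 - x / 2) (q 0 + x / 2) ∧ y 1 ∈ Set.Icc (q 1 - x / 2) (q 1 + x / 2)}

/-- The tile in position `(a, b)` of `Tiling(m)` of the square with center `q` and side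
length `x`: the `(a, b)`-th of the `4^m` closed congruent subsquares of side `x / 2^m`
arranged in a `2^m × 2^m` grid. -/
def tile (q : Pt) (x : ℝ) (m : ℕ) (a b : ℕ) : Set Pt :=
  {y | y 0 ∈ Set.Icc (q 0 - x / 2 + a * (x / 2 ^ m)) (q 0 - x / 2 + (a + 1) * (x / 2 ^ m)) ∧
       y 1 ∈ Set.Icc (q 1 - x / 2 + b * (x / 2 ^ m)) (q 1 - x / 2 + (b + 1) * (x / 2 ^ m))}

/-- `t` is a tile of `Tiling(m)` of the square with center `q` and side length `x`. -/
def IsTile (q : Pt) (x : ℝ) (m : ℕ) (t : Set Pt) : Prop :=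
  ∃ a b : ℕ, a < 2 ^ m ∧ b < 2 ^ m ∧ t = tile q x m a b

/-- The `k`-th piece of `Slicing(i)` of the square with center `q` and side length `x`:
the part of the square lying in the angular sector bounded by the half-lines from `q` at
direction angles `2πk/2^i` and `2π(k+1)/2^i` (for `i ≥ 3` this piece is a triangle). -/
def slicePiece (q : Pt) (x : ℝ) (i k : ℕ) : Set Pt :=
  {y | ∃ r : ℝ, 0 ≤ r ∧ ∃ θ : ℝ, 2 * π * k / 2 ^ i ≤ θ ∧ θ ≤ 2 * π * (k + 1) / 2 ^ i ∧
    y = q + r • unitDir θ} ∩ square q x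

/-- `T` is a triangle of `Slicing(i)` of the square with center `q` and side length `x`. -/
def IsSliceTriangle (q : Pt) (x : ℝ) (i : ℕ) (T : Set Pt) : Prop :=
  ∃ k : ℕ, k < 2 ^ i ∧ T = slicePiece q x i k

/-- The vertex of `Slicing(i)` on the boundary of the square of side 2 centered at the
origin: the intersection of the `k`-th slicing half-line with the boundary of the square. -/
def sliceVertex (i k : ℕ) : Pt :=
  (max |Real.cos (2 * π * k / 2 ^ i)| |Real.sin (2 * π * k / 2 ^ i)|)⁻¹ •
    unitDir (2 * π * k / 2 ^ i)

/-- The set of side lengths of the triangles of `Slicing(i)` of the square of side 2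
centered at the origin (the triangle `k` has vertices `0`, `sliceVertex i k` and
`sliceVertex i (k+1)`); the ratios of side lengths are independent of the size of the
square. -/
def sideLengths (i : ℕ) : Set ℝ :=
  ⋃ k ∈ Set.Iio (2 ^ i), {‖sliceVertex i k‖, dist (sliceVertex i k) (sliceVertex i (k + 1))}

/-- `ρ i`: the maximum of `⌈a/b⌉` over all side lengths `a`, `b` of triangles of
`Slicing(i)` of a square. -/
def rho (i : ℕ) : ℕ :=
  sSup {n : ℕ | ∃ a ∈ sideLengths i, ∃ b ∈ sideLengths i, n = ⌈a / b⌉₊}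

/-- `φ(i) = i · ρ i`. -/
def phi (i : ℕ) : ℕ := i * rho i

/-- `index(α) = 4 · φ(max(3, ⌈log₂(2π/α)⌉ + 1))`. -/
def index (α : ℝ) : ℕ := 4 * phi (max 3 (⌈Real.logb 2 (2 * π / α)⌉ + 1)).toNat

lemma arctan_abs_le_abs (t : ℝ) : |Real.arctan t| ≤ |t| := by
  have key : ∀ s : ℝ, 0 ≤ s → Real.arctan s ≤ s := by
    intro s hs
    have h1 : 0 ≤ Real.arctan s := by
      rw [← Real.arctan_zero]; exact Real.arctan_strictMono.monotone hs
    exact le_trans (Real.le_tan h1 (Real.arctan_lt_pi_div_two s)) (le_of_eq (Real.tan_arctan s))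
  rcases le_or_gt 0 t with ht | ht
  · have h1 : 0 ≤ Real.arctan t := by
      rw [← Real.arctan_zero]; exact Real.arctan_strictMono.monotone ht
    rw [abs_of_nonneg h1, abs_of_nonneg ht]; exact key t ht
  · have h1 : Real.arctan t < 0 := by
      rw [← Real.arctan_zero]; exact Real.arctan_strictMono ht
    rw [abs_of_neg h1, abs_of_neg ht, ← Real.arctan_neg]
    exact key (-t) (by linarith)

lemma norm_sliceVertex_zero (i : ℕ) : ‖sliceVertex i 0‖ = 1 := by
  have h0 : 2 * π * ((0 : ℕ) : ℝ) / 2 ^ i = 0 := by simp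
  rw [sliceVertex, h0]
  norm_num [unitDir, EuclideanSpace.norm_eq, Fin.sum_univ_two]

lemma one_le_rho (i : ℕ) : 1 ≤ rho i := by
  have hfin : (sideLengths i).Finite :=
    Set.Finite.biUnion (Set.finite_Iio _) fun k _ => (Set.finite_singleton _).insert _
  have hsub : {n : ℕ | ∃ a ∈ sideLengths i, ∃ b ∈ sideLengths i, n = ⌈a / b⌉₊}
      ⊆ (fun p : ℝ × ℝ => ⌈p.1 / p.2⌉₊) '' (sideLengths i ×ˢ sideLengths i) := by
    rintro n ⟨a, ha, b, hb, rfl⟩; exact ⟨(a, b), ⟨ha, hb⟩, rfl⟩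
  have hbdd : BddAbove {n : ℕ | ∃ a ∈ sideLengths i, ∃ b ∈ sideLengths i, n = ⌈a / b⌉₊} :=
    (((hfin.prod hfin).image _).subset hsub).bddAbove
  have hv : ‖sliceVertex i 0‖ ∈ sideLengths i :=
    Set.mem_biUnion (show (0 : ℕ) ∈ Set.Iio (2 ^ i) from Nat.pow_pos (by norm_num))
      (Set.mem_insert _ _)
  have hmem : 1 ∈ {n : ℕ | ∃ a ∈ sideLengths i, ∃ b ∈ sideLengths i, n = ⌈a / b⌉₊} := by
    refine ⟨_, hv, _, hv, ?_⟩
    rw [div_self (by rw [norm_sliceVertex_zero]; norm_num), Nat.ceil_one]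
  exact le_csSup hbdd hmem

set_option maxHeartbeats 2000000 in
/-- For every integer `i ≥ 3`, every axis-aligned square `S` and every triangle `T` of
`Slicing(i)` of `S`, at least one tile of `Tiling(4φ(i))` of `S` is contained in the
interior of `T`. -/
theorem slice_triangle_contains_interior_tile (i : ℕ) (hi : 3 ≤ i)
    (q : Pt) (x : ℝ) (hx : 0 < x)
    (T : Set Pt) (hT : IsSliceTriangle q x i T) :
    ∃ t : Set Pt, IsTile q x (4 * phi i) t ∧ t ⊆ interior T := by
  obtain ⟨k, hk, rfl⟩ := hT
  set M := 4 * phi i with hMdef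
  have hiM : i + 4 ≤ M := by
    have h1 : i ≤ phi i := by
      have := one_le_rho i
      calc i = i * 1 := (mul_one i).symm
        _ ≤ i * rho i := Nat.mul_le_mul_left i this
        _ = phi i := rfl
    omega
  have h2M : (2 : ℝ) ^ (i + 4) ≤ 2 ^ M := by
    exact pow_le_pow_right₀ one_le_two hiM
  have h2i : (0 : ℝ) < 2 ^ i := pow_pos two_pos i
  have h2Mpos : (0 : ℝ) < 2 ^ M := pow_pos two_pos M
  set ε : ℝ := x / 2 ^ M with hεdef
  have hε : 0 < ε := div_pos hx h2Mpos
  clear_value M ε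
  have hεbig : ε * 2 ^ (i + 4) ≤ x := by
    rw [hεdef, div_mul_eq_mul_div, div_le_iff₀ h2Mpos]
    exact mul_le_mul_of_nonneg_left h2M hx.le
  have h2i4 : (128 : ℝ) ≤ 2 ^ (i + 4) := by
    calc (128 : ℝ) = 2 ^ 7 := by norm_num
      _ ≤ 2 ^ (i + 4) := pow_le_pow_right₀ one_le_two (by omega)
  have hpow16 : (2 : ℝ) ^ (i + 4) = 16 * 2 ^ i := by rw [pow_add]; norm_num [mul_comm]
  have hεbig' : ε * (16 * 2 ^ i) ≤ x := by rw [← hpow16]; exact hεbig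
  have hε128 : ε * 128 ≤ x :=
    le_trans (mul_le_mul_of_nonneg_left h2i4 hε.le) hεbig
  have hεsmall : 8 * ε ≤ x / 8 := by linarith
  -- the key angular smallness: 4ε / (x/8) ≤ π / 2^i
  have hπ : (3 : ℝ) < π := Real.pi_gt_three
  have hangle : 4 * ε ≤ (x / 8) * (π / 2 ^ i) := by
    have h3 : 32 * ε * 2 ^ i ≤ 2 * x := by linarith [hεbig']
    have h5 : 4 * ε * 2 ^ i ≤ x / 8 * π := by
      have hxπ : x * 3 ≤ x * π := mul_le_mul_of_nonneg_left hπ.le hx.le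
      linarith
    have h6 : x / 8 * (π / 2 ^ i) = (x / 8 * π) / 2 ^ i := by ring
    rw [h6, le_div_iff₀ h2i]
    exact h5
  set θk : ℝ := 2 * π * k / 2 ^ i with hθkdef
  set θm : ℝ := θk + π / 2 ^ i with hθmdef
  set c : ℝ := Real.cos θm with hcdef
  set s : ℝ := Real.sin θm with hsdef
  have hc1 : -1 ≤ c := Real.neg_one_le_cos θm
  have hc2 : c ≤ 1 := Real.cos_le_one θm
  have hs1 : -1 ≤ s := Real.neg_one_le_sin θm
  have hs2 : s ≤ 1 := Real.sin_le_one θm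
  have hpyth : s ^ 2 + c ^ 2 = 1 := Real.sin_sq_add_cos_sq θm
  clear_value θk θm c s
  set c0 : ℝ := x / 2 + x / 4 * c with hc0def
  set c1 : ℝ := x / 2 + x / 4 * s with hc1def
  have hc0pos : 0 < c0 := by rw [hc0def]; linarith [mul_nonneg hx.le (by linarith : (0:ℝ) ≤ c + 1)]
  have hc0lt : c0 < x := by rw [hc0def]; linarith [mul_nonneg hx.le (by linarith : (0:ℝ) ≤ 1 - c)]
  have hc1pos : 0 < c1 := by rw [hc1def]; linarith [mul_nonneg hx.le (by linarith : (0:ℝ) ≤ s + 1)]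
  have hc1lt : c1 < x := by rw [hc1def]; linarith [mul_nonneg hx.le (by linarith : (0:ℝ) ≤ 1 - s)]
  set a : ℕ := ⌊c0 / ε⌋₊ with hadef
  set b : ℕ := ⌊c1 / ε⌋₊ with hbdef
  have hax : (a : ℝ) * ε ≤ c0 := by
    rw [← le_div_iff₀ hε]; exact Nat.floor_le (le_of_lt (div_pos hc0pos hε))
  have haX : c0 < ((a : ℝ) + 1) * ε := by
    rw [← div_lt_iff₀ hε]
    have := Nat.lt_floor_add_one (c0 / ε)
    push_cast
    linarith
  have hbx : (b : ℝ) * ε ≤ c1 := by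
    rw [← le_div_iff₀ hε]; exact Nat.floor_le (le_of_lt (div_pos hc1pos hε))
  have hbX : c1 < ((b : ℝ) + 1) * ε := by
    rw [← div_lt_iff₀ hε]
    have := Nat.lt_floor_add_one (c1 / ε)
    push_cast
    linarith
  have ha2 : a < 2 ^ M := by
    have : c0 / ε < (2 : ℝ) ^ M := by
      rw [div_lt_iff₀ hε]
      calc c0 < x := hc0lt
        _ = ε * 2 ^ M := by rw [hεdef]; field_simp
        _ = 2 ^ M * ε := by ring
    have h' : c0 / ε < ((2 ^ M : ℕ) : ℝ) := by push_cast; exact this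
    exact_mod_cast Nat.floor_lt (le_of_lt (div_pos hc0pos hε)) |>.mpr h'
  have hb2 : b < 2 ^ M := by
    have : c1 / ε < (2 : ℝ) ^ M := by
      rw [div_lt_iff₀ hε]
      calc c1 < x := hc1lt
        _ = ε * 2 ^ M := by rw [hεdef]; field_simp
        _ = 2 ^ M * ε := by ring
    have h' : c1 / ε < ((2 ^ M : ℕ) : ℝ) := by push_cast; exact this
    exact_mod_cast Nat.floor_lt (le_of_lt (div_pos hc1pos hε)) |>.mpr h'
  clear_value c0 c1 a b
  refine ⟨tile q x M a b, ⟨a, b, ha2, hb2, rfl⟩, ?_⟩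
  -- the open neighborhood
  set U : Set Pt :=
    (fun y : Pt => y 0) ⁻¹' Set.Ioo (q 0 - x / 2 + a * ε - ε / 2) (q 0 - x / 2 + (a + 1) * ε + ε / 2) ∩
    (fun y : Pt => y 1) ⁻¹' Set.Ioo (q 1 - x / 2 + b * ε - ε / 2) (q 1 - x / 2 + (b + 1) * ε + ε / 2)
    with hUdef
  have hUopen : IsOpen U :=
    (isOpen_Ioo.preimage (EuclideanSpace.proj (0 : Fin 2)).continuous).inter
      (isOpen_Ioo.preimage (EuclideanSpace.proj (1 : Fin 2)).continuous)
  have htileU : tile q x M a b ⊆ U := by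
    rintro y ⟨⟨h1, h2⟩, ⟨h3, h4⟩⟩
    have hxε : x / 2 ^ M = ε := hεdef.symm
    rw [hxε] at h1 h2 h3 h4
    exact ⟨⟨by linarith, by linarith⟩, ⟨by linarith, by linarith⟩⟩
  have hUT : U ⊆ slicePiece q x i k := by
    rintro y ⟨⟨hy0l, hy0r⟩, ⟨hy1l, hy1r⟩⟩
    set v0 : ℝ := y 0 - q 0 with hv0def
    set v1 : ℝ := y 1 - q 1 with hv1def
    have he0l : -(2 * ε) < v0 - x / 4 * c := by
      have : q 0 - x / 2 + c0 - 2 * ε < y 0 := by linarith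
      rw [hc0def] at this; linarith
    have he0r : v0 - x / 4 * c < 2 * ε := by
      have : y 0 < q 0 - x / 2 + c0 + 2 * ε := by linarith
      rw [hc0def] at this; linarith
    have he1l : -(2 * ε) < v1 - x / 4 * s := by
      have : q 1 - x / 2 + c1 - 2 * ε < y 1 := by linarith
      rw [hc1def] at this; linarith
    have he1r : v1 - x / 4 * s < 2 * ε := by
      have : y 1 < q 1 - x / 2 + c1 + 2 * ε := by linarith
      rw [hc1def] at this; linarith
    set A : ℝ := v0 * c + v1 * s with hAdef
    set B : ℝ := v1 * c - v0 * s with hBdef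
    set e0 : ℝ := v0 - x / 4 * c with he0def
    set e1 : ℝ := v1 - x / 4 * s with he1def
    clear_value v0 v1 A B e0 e1
    have hAeq : A = x / 4 + (e0 * c + e1 * s) := by
      rw [hAdef, he0def, he1def]; linear_combination (x / 4) * hpyth
    have he0c : |e0 * c| ≤ 2 * ε := by
      rw [abs_mul]
      calc |e0| * |c| ≤ (2 * ε) * 1 := by
            apply mul_le_mul (abs_le.mpr ⟨he0l.le, he0r.le⟩) (abs_le.mpr ⟨hc1, hc2⟩)
              (abs_nonneg _) (by linarith)
        _ = 2 * ε := by ring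
    have he1s : |e1 * s| ≤ 2 * ε := by
      rw [abs_mul]
      calc |e1| * |s| ≤ (2 * ε) * 1 := by
            apply mul_le_mul (abs_le.mpr ⟨he1l.le, he1r.le⟩) (abs_le.mpr ⟨hs1, hs2⟩)
              (abs_nonneg _) (by linarith)
        _ = 2 * ε := by ring
    have he1c : |e1 * c| ≤ 2 * ε := by
      rw [abs_mul]
      calc |e1| * |c| ≤ (2 * ε) * 1 := by
            apply mul_le_mul (abs_le.mpr ⟨he1l.le, he1r.le⟩) (abs_le.mpr ⟨hc1, hc2⟩)
              (abs_nonneg _) (by linarith)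
        _ = 2 * ε := by ring
    have he0s : |e0 * s| ≤ 2 * ε := by
      rw [abs_mul]
      calc |e0| * |s| ≤ (2 * ε) * 1 := by
            apply mul_le_mul (abs_le.mpr ⟨he0l.le, he0r.le⟩) (abs_le.mpr ⟨hs1, hs2⟩)
              (abs_nonneg _) (by linarith)
        _ = 2 * ε := by ring
    have hA : x / 8 ≤ A := by
      have h1 := (abs_le.mp he0c).1
      have h2 := (abs_le.mp he1s).1
      rw [hAeq]; linarith
    have hApos : 0 < A := by linarith [hεsmall, hε, hA]
    have hBeq : B = e1 * c - e0 * s := by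
      rw [hBdef, he0def, he1def]; ring
    have hB : |B| ≤ 4 * ε := by
      rw [hBeq]
      calc |e1 * c - e0 * s| ≤ |e1 * c| + |e0 * s| := abs_sub _ _
        _ ≤ 2 * ε + 2 * ε := add_le_add he1c he0s
        _ = 4 * ε := by ring
    have hBA : |B / A| ≤ π / 2 ^ i := by
      rw [abs_div, abs_of_pos hApos, div_le_iff₀ hApos]
      have hπ2 : 0 ≤ π / 2 ^ i := by positivity
      calc |B| ≤ 4 * ε := hB
        _ ≤ x / 8 * (π / 2 ^ i) := hangle
        _ = π / 2 ^ i * (x / 8) := by ring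
        _ ≤ π / 2 ^ i * A := mul_le_mul_of_nonneg_left hA hπ2
    set δ : ℝ := Real.arctan (B / A) with hδdef
    have hδle : |δ| ≤ π / 2 ^ i := le_trans (arctan_abs_le_abs _) hBA
    have hδ1 : -(π / 2) < δ := Real.neg_pi_div_two_lt_arctan _
    have hδ2 : δ < π / 2 := Real.arctan_lt_pi_div_two _
    have hcosδ : 0 < Real.cos δ := Real.cos_pos_of_mem_Ioo ⟨hδ1, hδ2⟩
    set r : ℝ := A / Real.cos δ with hrdef
    have hr : 0 ≤ r := le_of_lt (div_pos hApos hcosδ)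
    have hrc : r * Real.cos δ = A := by
      rw [hrdef]; field_simp
    have hrs : r * Real.sin δ = B := by
      have ht : Real.tan δ = B / A := Real.tan_arctan _
      rw [Real.tan_eq_sin_div_cos] at ht
      have : Real.sin δ = B / A * Real.cos δ := by
        field_simp at ht ⊢; linarith [ht]
      rw [hrdef, this]; field_simp
    set θ : ℝ := θm + δ with hθdef
    have hcosθ : r * Real.cos θ = v0 := by
      rw [hθdef, Real.cos_add]
      have expand : r * (Real.cos θm * Real.cos δ - Real.sin θm * Real.sin δ)
          = c * (r * Real.cos δ) - s * (r * Real.sin δ) := by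
        rw [hcdef, hsdef]; ring
      rw [expand, hrc, hrs, hAdef, hBdef]; linear_combination v0 * hpyth
    have hsinθ : r * Real.sin θ = v1 := by
      rw [hθdef, Real.sin_add]
      have expand : r * (Real.sin θm * Real.cos δ + Real.cos θm * Real.sin δ)
          = s * (r * Real.cos δ) + c * (r * Real.sin δ) := by
        rw [hcdef, hsdef]; ring
      rw [expand, hrc, hrs, hAdef, hBdef]; linear_combination v1 * hpyth
    have hδabs := abs_le.mp hδle
    constructor
    · -- sector membership
      refine ⟨r, hr, θ, ?_, ?_, ?_⟩
      · rw [hθdef, hθmdef, hθkdef]; linarith [hδabs.1]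
      · rw [hθdef, hθmdef, hθkdef]
        have : 2 * π * ((k : ℝ) + 1) / 2 ^ i = 2 * π * k / 2 ^ i + 2 * π / 2 ^ i := by
          field_simp
        rw [this]
        have hπ2i : π / 2 ^ i + π / 2 ^ i = 2 * π / 2 ^ i := by ring
        linarith [hδabs.2]
      · ext j
        fin_cases j
        · show y 0 = (q + r • unitDir θ) 0
          simp only [unitDir, PiLp.add_apply, PiLp.smul_apply, PiLp.toLp_apply, Matrix.cons_val_zero,
            smul_eq_mul]
          rw [hcosθ, hv0def]; ring
        · show y 1 = (q + r • unitDir θ) 1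
          simp only [unitDir, PiLp.add_apply, PiLp.smul_apply, PiLp.toLp_apply, Matrix.cons_val_one,
            Matrix.head_cons, Matrix.cons_val_zero, smul_eq_mul]
          rw [hsinθ, hv1def]; ring
    · -- square membership
      have hb0 : |v0| ≤ x / 2 := by
        have h1 := (abs_le.mp he0c).1
        rw [abs_le]
        constructor <;>
          linarith [he0l, he0r, hε, hεsmall,
            mul_nonneg hx.le (show (0:ℝ) ≤ 1 - c by linarith),
            mul_nonneg hx.le (show (0:ℝ) ≤ c + 1 by linarith)]
      have hb1 : |v1| ≤ x / 2 := by
        rw [abs_le]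
        constructor <;>
          linarith [he1l, he1r, hε, hεsmall,
            mul_nonneg hx.le (show (0:ℝ) ≤ 1 - s by linarith),
            mul_nonneg hx.le (show (0:ℝ) ≤ s + 1 by linarith)]
      have hb0' := abs_le.mp hb0
      have hb1' := abs_le.mp hb1
      exact ⟨⟨by rw [hv0def] at hb0'; linarith [hb0'.1], by linarith [hb0'.2]⟩,
        ⟨by linarith [hb1'.1], by linarith [hb1'.2]⟩⟩
  exact fun y hy => interior_maximal hUT hUopen (htileU hy)
end
end

section
/- Let S be an axis-aligned square with center q and let α be a real with 0 < α < 2π. For every closed angular sector Q with apex q and angle 2π − α, there exists a tile of Tiling(index(α)) of S that is disjoint from Q. -/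
open Real

noncomputable section

lemma norm_unitDir (θ : ℝ) : ‖unitDir θ‖ = 1 := by
  rw [EuclideanSpace.norm_eq]
  simp [unitDir, Fin.sum_univ_two, sq_abs]

lemma key_index_ineq (α : ℝ) (hα : 0 < α) (hα2 : α < 2 * π) :
    256 * π ^ 2 ≤ 2 ^ (index α) * α ^ 2 := by
  have hπ := Real.pi_pos
  set i : ℕ := (max 3 (⌈Real.logb 2 (2 * π / α)⌉ + 1)).toNat with hi
  have hmi : 4 * i ≤ index α := by
    have h1 : index α = 4 * (i * rho i) := rfl
    rw [h1]
    exact Nat.mul_le_mul_left 4 (Nat.le_mul_of_pos_right i (one_le_rho i))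
  have hi3 : 3 ≤ i := by
    rw [hi]
    have h := Int.toNat_le_toNat (le_max_left 3 (⌈Real.logb 2 (2 * π / α)⌉ + 1))
    simpa using h
  have h2πα : (0:ℝ) < 2 * π / α := by positivity
  have hlog : Real.logb 2 (2 * π / α) ≤ (i : ℝ) := by
    have h1 : Real.logb 2 (2 * π / α) ≤ (⌈Real.logb 2 (2 * π / α)⌉ : ℝ) := Int.le_ceil _
    have h2 : ((max 3 (⌈Real.logb 2 (2 * π / α)⌉ + 1) : ℤ) : ℝ) ≤ (i : ℝ) := by
      rw [hi]; exact_mod_cast Int.self_le_toNat _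
    have h3 : ((⌈Real.logb 2 (2 * π / α)⌉ + 1 : ℤ) : ℝ) ≤
        ((max 3 (⌈Real.logb 2 (2 * π / α)⌉ + 1) : ℤ) : ℝ) := by
      exact_mod_cast le_max_right (3:ℤ) (⌈Real.logb 2 (2 * π / α)⌉ + 1)
    push_cast at h3 h2 ⊢
    linarith
  have hT8 : (8:ℝ) ≤ 2 ^ i := by
    calc (8:ℝ) = 2 ^ (3:ℕ) := by norm_num
    _ ≤ 2 ^ i := pow_le_pow_right₀ one_le_two hi3
  have hTα' : 2 * π / α ≤ (2:ℝ) ^ i := by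
    calc 2 * π / α = (2:ℝ) ^ Real.logb 2 (2 * π / α) :=
          (Real.rpow_logb two_pos (by norm_num) h2πα).symm
    _ ≤ (2:ℝ) ^ (i : ℝ) := Real.rpow_le_rpow_of_exponent_le one_le_two hlog
    _ = (2:ℝ) ^ i := by rw [Real.rpow_natCast]
  have hTα : 2 * π ≤ 2 ^ i * α := by
    rw [div_le_iff₀ hα] at hTα'; linarith
  have h4 : ((2:ℝ) ^ i) ^ 4 ≤ 2 ^ (index α) := by
    rw [← pow_mul]
    exact pow_le_pow_right₀ one_le_two (by omega)
  have h1 : (2 * π) ^ 2 ≤ (2 ^ i * α) ^ 2 := pow_le_pow_left₀ (by positivity) hTα 2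
  have h2 : (8:ℝ) ^ 2 ≤ ((2:ℝ) ^ i) ^ 2 := pow_le_pow_left₀ (by norm_num) hT8 2
  have h3 : (2 * π) ^ 2 * 8 ^ 2 ≤ (2 ^ i * α) ^ 2 * ((2:ℝ) ^ i) ^ 2 :=
    mul_le_mul h1 h2 (by norm_num) (by positivity)
  have h5 : ((2:ℝ) ^ i) ^ 4 * α ^ 2 ≤ 2 ^ (index α) * α ^ 2 :=
    mul_le_mul_of_nonneg_right h4 (sq_nonneg α)
  nlinarith [h3, h5]


set_option maxHeartbeats 1000000 in
/-- For every `α ∈ (0, 2π)` and every closed angular sector `Q` of angle `2π − α` with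
apex at the center `q` of an axis-aligned square `S`, some tile of `Tiling(index(α))` of
`S` is disjoint from `Q`. -/
theorem exists_tile_disjoint_from_sector (q : Pt) (x : ℝ) (hx : 0 < x)
    (α : ℝ) (hα : 0 < α) (hα2 : α < 2 * π) (a : ℝ) :
    ∃ t : Set Pt, IsTile q x (index α) t ∧ t ∩ sector q a (2 * π - α) = ∅ := by
  have h2m : 256 * π ^ 2 ≤ 2 ^ (index α) * α ^ 2 := key_index_ineq α hα hα2
  have hπ := Real.pi_pos
  have hπ2 : (0:ℝ) < π ^ 2 := by positivity
  have h2mpos : (0:ℝ) < 2 ^ (index α) := by positivity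
  obtain ⟨ε, hεdef⟩ : ∃ e : ℝ, e = x / 2 ^ (index α) := ⟨_, rfl⟩
  have hεpos : 0 < ε := by rw [hεdef]; positivity
  have hkey : 256 * π ^ 2 * ε ≤ x * α ^ 2 := by
    have h := mul_le_mul_of_nonneg_right h2m hεpos.le
    calc 256 * π ^ 2 * ε ≤ 2 ^ (index α) * α ^ 2 * ε := h
    _ = x * α ^ 2 := by rw [hεdef]; field_simp
  have hα4 : x * α ^ 2 ≤ 4 * π ^ 2 * x := by
    have h3 : 0 < x * ((2 * π - α) * (2 * π + α)) :=
      mul_pos hx (mul_pos (by linarith) (by linarith))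
    nlinarith [h3]
  have hεx : ε < x / 16 := by nlinarith [hkey, hα4, mul_pos hπ2 hx, mul_pos hπ2 hεpos]
  obtain ⟨cb, hcb⟩ : ∃ c : ℝ, c = Real.cos (a + α / 2) := ⟨_, rfl⟩
  obtain ⟨sb, hsb⟩ : ∃ c : ℝ, c = Real.sin (a + α / 2) := ⟨_, rfl⟩
  have hcb1 : -1 ≤ cb := hcb ▸ Real.neg_one_le_cos _
  have hcb2 : cb ≤ 1 := hcb ▸ Real.cos_le_one _
  have hsb1 : -1 ≤ sb := hsb ▸ Real.neg_one_le_sin _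
  have hsb2 : sb ≤ 1 := hsb ▸ Real.sin_le_one _
  have hpyth : cb ^ 2 + sb ^ 2 = 1 := by
    rw [hcb, hsb, ← Real.sin_sq_add_cos_sq (a + α / 2)]; ring
  obtain ⟨c0, hc0⟩ : ∃ c : ℝ, c = x / 2 + x / 4 * cb := ⟨_, rfl⟩
  obtain ⟨c1, hc1⟩ : ∃ c : ℝ, c = x / 2 + x / 4 * sb := ⟨_, rfl⟩
  have hc0low : x / 4 ≤ c0 := by rw [hc0]; nlinarith
  have hc0hi : c0 ≤ 3 * x / 4 := by rw [hc0]; nlinarith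
  have hc1low : x / 4 ≤ c1 := by rw [hc1]; nlinarith
  have hc1hi : c1 ≤ 3 * x / 4 := by rw [hc1]; nlinarith
  have hc0pos : 0 < c0 := lt_of_lt_of_le (by positivity) hc0low
  have hc1pos : 0 < c1 := lt_of_lt_of_le (by positivity) hc1low
  obtain ⟨A, hA⟩ : ∃ n : ℕ, n = ⌊c0 * 2 ^ (index α) / x⌋₊ := ⟨_, rfl⟩
  obtain ⟨B, hB⟩ : ∃ n : ℕ, n = ⌊c1 * 2 ^ (index α) / x⌋₊ := ⟨_, rfl⟩
  have hnn0 : (0:ℝ) ≤ c0 * 2 ^ (index α) / x := div_nonneg (mul_nonneg hc0pos.le h2mpos.le) hx.le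
  have hnn1 : (0:ℝ) ≤ c1 * 2 ^ (index α) / x := div_nonneg (mul_nonneg hc1pos.le h2mpos.le) hx.le
  have hA_lt : A < 2 ^ (index α) := by
    rw [hA, Nat.floor_lt hnn0]
    push_cast
    rw [div_lt_iff₀ hx]
    have h3 : c0 * 2 ^ (index α) < x * 2 ^ (index α) := mul_lt_mul_of_pos_right (by linarith) h2mpos
    linarith
  have hB_lt : B < 2 ^ (index α) := by
    rw [hB, Nat.floor_lt hnn1]
    push_cast
    rw [div_lt_iff₀ hx]
    have h3 : c1 * 2 ^ (index α) < x * 2 ^ (index α) := mul_lt_mul_of_pos_right (by linarith) h2mpos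
    linarith
  have hA_le : (A : ℝ) * ε ≤ c0 := by
    have h := Nat.floor_le hnn0
    rw [← hA] at h
    rw [hεdef]
    calc (A : ℝ) * (x / 2 ^ (index α)) ≤ c0 * 2 ^ (index α) / x * (x / 2 ^ (index α)) :=
          mul_le_mul_of_nonneg_right h (by positivity)
    _ = c0 := by field_simp
  have hA_ge : c0 ≤ ((A : ℝ) + 1) * ε := by
    have h := (Nat.lt_floor_add_one (c0 * 2 ^ (index α) / x)).le
    rw [← hA] at h
    rw [hεdef]
    calc c0 = c0 * 2 ^ (index α) / x * (x / 2 ^ (index α)) := by field_simp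
    _ ≤ ((A : ℝ) + 1) * (x / 2 ^ (index α)) := mul_le_mul_of_nonneg_right h (by positivity)
  have hB_le : (B : ℝ) * ε ≤ c1 := by
    have h := Nat.floor_le hnn1
    rw [← hB] at h
    rw [hεdef]
    calc (B : ℝ) * (x / 2 ^ (index α)) ≤ c1 * 2 ^ (index α) / x * (x / 2 ^ (index α)) :=
          mul_le_mul_of_nonneg_right h (by positivity)
    _ = c1 := by field_simp
  have hB_ge : c1 ≤ ((B : ℝ) + 1) * ε := by
    have h := (Nat.lt_floor_add_one (c1 * 2 ^ (index α) / x)).le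
    rw [← hB] at h
    rw [hεdef]
    calc c1 = c1 * 2 ^ (index α) / x * (x / 2 ^ (index α)) := by field_simp
    _ ≤ ((B : ℝ) + 1) * (x / 2 ^ (index α)) := mul_le_mul_of_nonneg_right h (by positivity)
  refine ⟨tile q x (index α) A B, ⟨A, B, hA_lt, hB_lt, rfl⟩, ?_⟩
  rw [Set.eq_empty_iff_forall_notMem]
  rintro p ⟨hpt, r, hr, t, ht0, ht1, hp⟩
  obtain ⟨⟨hp0l, hp0u⟩, ⟨hp1l, hp1u⟩⟩ := hpt
  rw [← hεdef] at hp0l hp0u hp1l hp1u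
  have hp0 : p 0 = q 0 + r * Real.cos (a - t) := by
    have h := congrArg (fun v : Pt => v 0) hp
    simpa [unitDir, PiLp.add_apply, PiLp.smul_apply, smul_eq_mul] using h
  have hp1 : p 1 = q 1 + r * Real.sin (a - t) := by
    have h := congrArg (fun v : Pt => v 1) hp
    simpa [unitDir, PiLp.add_apply, PiLp.smul_apply, smul_eq_mul] using h
  obtain ⟨ca, hca⟩ : ∃ c : ℝ, c = Real.cos (a - t) := ⟨_, rfl⟩
  obtain ⟨sa, hsa⟩ : ∃ c : ℝ, c = Real.sin (a - t) := ⟨_, rfl⟩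
  rw [← hca] at hp0
  rw [← hsa] at hp1
  have hpyth2 : ca ^ 2 + sa ^ 2 = 1 := by
    rw [hca, hsa, ← Real.sin_sq_add_cos_sq (a - t)]; ring
  have hd0l : -ε ≤ r * ca - x / 4 * cb := by
    rw [hp0] at hp0l hp0u
    rw [hc0] at hA_le hA_ge
    linarith
  have hd0u : r * ca - x / 4 * cb ≤ ε := by
    rw [hp0] at hp0l hp0u
    rw [hc0] at hA_le hA_ge
    linarith
  have hd1l : -ε ≤ r * sa - x / 4 * sb := by
    rw [hp1] at hp1l hp1u
    rw [hc1] at hB_le hB_ge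
    linarith
  have hd1u : r * sa - x / 4 * sb ≤ ε := by
    rw [hp1] at hp1l hp1u
    rw [hc1] at hB_le hB_ge
    linarith
  have e0l : -ε ≤ (r * ca - x / 4 * cb) * cb := by
    nlinarith only [hd0l, hd0u, hcb1, hcb2, hεpos.le]
  have e0u : (r * ca - x / 4 * cb) * cb ≤ ε := by
    nlinarith only [hd0l, hd0u, hcb1, hcb2, hεpos.le]
  have e1l : -ε ≤ (r * sa - x / 4 * sb) * sb := by
    nlinarith only [hd1l, hd1u, hsb1, hsb2, hεpos.le]
  have e1u : (r * sa - x / 4 * sb) * sb ≤ ε := by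
    nlinarith only [hd1l, hd1u, hsb1, hsb2, hεpos.le]
  have hsq0 : (r * ca - x / 4 * cb) ^ 2 ≤ ε ^ 2 := sq_le_sq' hd0l hd0u
  have hsq1 : (r * sa - x / 4 * sb) ^ 2 ≤ ε ^ 2 := sq_le_sq' hd1l hd1u
  have hr2eq : (r * ca) ^ 2 + (r * sa) ^ 2 = r ^ 2 := by
    rw [mul_pow, mul_pow, ← mul_add, hpyth2, mul_one]
  have hx2pyth : x ^ 2 * (cb ^ 2 + sb ^ 2) = x ^ 2 := by rw [hpyth, mul_one]
  have hxpyth : x * (cb ^ 2 + sb ^ 2) = x := by rw [hpyth, mul_one]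
  have hr_sq : r ^ 2 ≤ (x / 4 + 2 * ε) ^ 2 := by
    nlinarith only [hr2eq, hsq0, hsq1, e0u, e1u, hx2pyth, hεpos.le, hx.le,
      mul_nonneg hx.le (sub_nonneg.2 e0u), mul_nonneg hx.le (sub_nonneg.2 e1u), sq_nonneg ε]
  have hr_le : r ≤ x / 4 + 2 * ε := by
    have hR : (0:ℝ) ≤ x / 4 + 2 * ε := by linarith
    nlinarith only [hr_sq, hr, hR]
  have hinner : x / 4 - 2 * ε ≤ r * Real.cos (t + α / 2) := by
    have hcs : Real.cos ((a - t) - (a + α / 2)) = ca * cb + sa * sb := by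
      rw [hca, hsa, hcb, hsb]; exact Real.cos_sub _ _
    have harg : (a - t) - (a + α / 2) = -(t + α / 2) := by ring
    rw [harg, Real.cos_neg] at hcs
    have heq : r * Real.cos (t + α / 2) = (r * ca) * cb + (r * sa) * sb := by
      rw [hcs]; ring
    rw [heq]
    nlinarith only [e0l, e1l, hxpyth]
  have hang : Real.cos (t + α / 2) ≤ Real.cos (α / 2) := by
    have hcc := Real.cos_sub_cos (t + α / 2) (α / 2)
    have h1 : 0 ≤ Real.sin ((t + α / 2 + α / 2) / 2) :=
      Real.sin_nonneg_of_nonneg_of_le_pi (by linarith) (by linarith)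
    have h2 : 0 ≤ Real.sin ((t + α / 2 - α / 2) / 2) :=
      Real.sin_nonneg_of_nonneg_of_le_pi (by linarith) (by linarith)
    nlinarith only [hcc, mul_nonneg h1 h2]
  have hcos_ub : Real.cos (α / 2) ≤ 1 - 2 / π ^ 2 * (α / 2) ^ 2 :=
    Real.cos_le_one_sub_mul_cos_sq (by rw [abs_of_pos (by linarith)]; linarith)
  have hcos2 : π ^ 2 * Real.cos (α / 2) ≤ π ^ 2 - α ^ 2 / 2 := by
    have h := mul_le_mul_of_nonneg_left hcos_ub hπ2.le
    calc π ^ 2 * Real.cos (α / 2) ≤ π ^ 2 * (1 - 2 / π ^ 2 * (α / 2) ^ 2) := h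
    _ = π ^ 2 - α ^ 2 / 2 := by field_simp
  have hrc : r * Real.cos (t + α / 2) ≤ r * Real.cos (α / 2) :=
    mul_le_mul_of_nonneg_left hang hr
  rcases le_or_gt (Real.cos (α / 2)) 0 with h | h
  · have hneg : r * Real.cos (α / 2) ≤ 0 := mul_nonpos_of_nonneg_of_nonpos hr h
    linarith
  · have hRc : r * Real.cos (α / 2) ≤ (x / 4 + 2 * ε) * Real.cos (α / 2) :=
      mul_le_mul_of_nonneg_right hr_le h.le
    have hfin : x / 4 - 2 * ε ≤ (x / 4 + 2 * ε) * Real.cos (α / 2) := by linarith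
    have hfin2 : π ^ 2 * (x / 4 - 2 * ε) ≤ π ^ 2 * ((x / 4 + 2 * ε) * Real.cos (α / 2)) :=
      mul_le_mul_of_nonneg_left hfin hπ2.le
    have hfin3 : (x / 4 + 2 * ε) * (π ^ 2 * Real.cos (α / 2)) ≤
        (x / 4 + 2 * ε) * (π ^ 2 - α ^ 2 / 2) :=
      mul_le_mul_of_nonneg_left hcos2 (by linarith)
    nlinarith only [hfin2, hfin3, hkey, mul_pos hπ2 hεpos, mul_pos hεpos (pow_pos hα 2)]
end
end
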